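/- Quasi-additivity is equivalent to its primed form: given monotonicity and Boolean reasoning, the axiom 'α ≿ β iff (α ∧ ¬β) ≿ (β ∧ ¬α)' holds for all α, β if and only if 'for all γ, θ, δ with δ incompatible with γ and with θ, (γ ∨ δ) ≿ (θ ∨ δ) iff γ ≿ θ' holds. -/
import Mathlib

lemma stmt_8_aux {B : Type*} [BooleanAlgebra B] (c t d : B) (hc : c ⊓ d = ⊥) :
    (c ⊔ d) ⊓ (t ⊔ d)ᶜ = c ⊓ tᶜ := by
  have hcd : c ⊓ dᶜ = c := inf_eq_left.mpr (disjoint_iff.mpr hc).le_compl_right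
  rw [compl_sup, inf_comm tᶜ dᶜ, ← inf_assoc, inf_sup_right, inf_compl_eq_bot,
    sup_bot_eq, hcd]

theorem stmt_8 {B : Type*} [BooleanAlgebra B] (r : B → B → Prop)
    (htrans : ∀ x y z, r x y → r y z → r x z)
    (htot : ∀ x y, r x y ∨ r y x)
    (hdist : ∀ x y, y ≤ x → r x y) :
    (∀ x y, r x y ↔ r (x ⊓ yᶜ) (y ⊓ xᶜ)) ↔
      (∀ c t d, c ⊓ d = ⊥ → t ⊓ d = ⊥ → (r (c ⊔ d) (t ⊔ d) ↔ r c t)) := by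
  constructor
  · intro A c t d hc ht
    have h1 := stmt_8_aux c t d hc
    have h2 := stmt_8_aux t c d ht
    rw [A (c ⊔ d) (t ⊔ d), h1, h2, ← A c t]
  · intro Bv x y
    have hc : (x ⊓ yᶜ) ⊓ (x ⊓ y) = ⊥ := by
      rw [inf_assoc, inf_comm x y, ← inf_assoc yᶜ, compl_inf_eq_bot, bot_inf_eq, inf_bot_eq]
    have ht : (y ⊓ xᶜ) ⊓ (x ⊓ y) = ⊥ := by
      rw [inf_assoc, ← inf_assoc xᶜ, compl_inf_eq_bot, bot_inf_eq, inf_bot_eq]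
    have := Bv (x ⊓ yᶜ) (y ⊓ xᶜ) (x ⊓ y) hc ht
    rw [← inf_sup_left, compl_sup_eq_top, inf_top_eq,
      inf_comm x y, ← inf_sup_left, compl_sup_eq_top, inf_top_eq] at this
    exact this
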